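/- Let A be a unique factorization domain, let q be a prime element of A, let h ∈ A be an element not divisible by q, and let M be a flat A-module. If m₁, m₂ ∈ M and n is a natural number such that h • m₁ = qⁿ • m₂ in M, then there exists y ∈ M with m₁ = qⁿ • y and m₂ = h • y. -/

import Mathlib

open scoped TensorProduct

/-- Let `A` be a UFD, `q` a prime element of `A`, `h ∈ A` not
divisible by `q`, and `M` a flat `A`-module. If `m₁, m₂ ∈ M` and `n : ℕ`
satisfy `h • m₁ = qⁿ • m₂` in `M`, then there exists `y ∈ M` with
`m₁ = qⁿ • y` and `m₂ = h • y`. -/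
theorem flat_koszul_division
    (A : Type*) [CommRing A] [IsDomain A] [UniqueFactorizationMonoid A]
    (M : Type*) [AddCommGroup M] [Module A M] [Module.Flat A M]
    (q : A) (hq : Prime q) (h : A) (hh : ¬ q ∣ h)
    (m₁ m₂ : M) (n : ℕ) (heq : h • m₁ = q ^ n • m₂) :
    ∃ y : M, m₁ = q ^ n • y ∧ m₂ = h • y := by
  classical
  have hqn : (q ^ n : A) ≠ 0 := pow_ne_zero n hq.ne_zero
  -- the maps
  set ψ : A →ₗ[A] A × A :=
    LinearMap.prod (LinearMap.toSpanSingleton A A (q ^ n))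
      (LinearMap.toSpanSingleton A A h) with hψ
  set φ : (A × A) →ₗ[A] A :=
    h • (LinearMap.fst A A A) - (q ^ n) • (LinearMap.snd A A A) with hφ
  have hexact : Function.Exact ψ φ := by
    intro x
    constructor
    · intro hx
      have hx' : h * x.1 = q ^ n * x.2 := by
        have : h * x.1 - q ^ n * x.2 = 0 := by simpa [hφ, smul_eq_mul] using hx
        linear_combination this
      have hd : q ^ n ∣ x.1 :=
        Prime.pow_dvd_of_dvd_mul_left hq n hh ⟨x.2, hx'⟩
      obtain ⟨c, hc⟩ := hd
      refine ⟨c, ?_⟩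
      have hx2 : x.2 = h * c := by
        apply mul_left_cancel₀ hqn
        rw [← hx', hc]; ring
      have : ψ c = (q ^ n * c, h * c) := by
        simp [hψ, LinearMap.toSpanSingleton_apply, smul_eq_mul, mul_comm]
      rw [this, ← hc, ← hx2]
    · rintro ⟨c, rfl⟩
      simp only [hψ, hφ, LinearMap.sub_apply, LinearMap.smul_apply,
        LinearMap.prod_apply, Function.prod, LinearMap.fst_apply, LinearMap.snd_apply,
        LinearMap.toSpanSingleton_apply, smul_eq_mul]
      ring
  have hTexact : Function.Exact (ψ.rTensor M) (φ.rTensor M) :=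
    Module.Flat.rTensor_exact M hexact
  -- the element
  set t : (A × A) ⊗[A] M := ((1, 0) : A × A) ⊗ₜ[A] m₁ + ((0, 1) : A × A) ⊗ₜ[A] m₂ with ht
  have htker : φ.rTensor M t = 0 := by
    have e1 : ((h : A)) ⊗ₜ[A] m₁ = (1 : A) ⊗ₜ[A] (h • m₁) := by
      rw [← TensorProduct.smul_tmul, smul_eq_mul, mul_one]
    have e2 : ((q ^ n : A)) ⊗ₜ[A] m₂ = (1 : A) ⊗ₜ[A] (q ^ n • m₂) := by
      rw [← TensorProduct.smul_tmul, smul_eq_mul, mul_one]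
    have e : φ.rTensor M t = (h : A) ⊗ₜ[A] m₁ - (q ^ n : A) ⊗ₜ[A] m₂ := by
      simp only [ht, hφ, map_add, LinearMap.rTensor_tmul, LinearMap.sub_apply,
        LinearMap.smul_apply, LinearMap.fst_apply, LinearMap.snd_apply, smul_eq_mul,
        mul_one, mul_zero, sub_zero, zero_sub, TensorProduct.neg_tmul]
      abel
    rw [e, e1, e2, heq, sub_self]
  obtain ⟨s, hs⟩ := (hTexact t).mp htker
  set y : M := TensorProduct.lid A M s with hy
  -- projections
  set p₁ : (A × A) ⊗[A] M →ₗ[A] M :=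
    (TensorProduct.lid A M).toLinearMap ∘ₗ (LinearMap.fst A A A).rTensor M with hp₁
  set p₂ : (A × A) ⊗[A] M →ₗ[A] M :=
    (TensorProduct.lid A M).toLinearMap ∘ₗ (LinearMap.snd A A A).rTensor M with hp₂
  have key₁ : p₁ ∘ₗ ψ.rTensor M = (q ^ n) • (TensorProduct.lid A M).toLinearMap := by
    apply TensorProduct.ext'
    intro a m
    simp [hp₁, hψ, LinearMap.rTensor_tmul, LinearMap.toSpanSingleton_apply,
      TensorProduct.smul_tmul', smul_eq_mul, mul_comm, mul_smul, smul_comm a (q ^ n) m]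
  have key₂ : p₂ ∘ₗ ψ.rTensor M = h • (TensorProduct.lid A M).toLinearMap := by
    apply TensorProduct.ext'
    intro a m
    simp [hp₂, hψ, LinearMap.rTensor_tmul, LinearMap.toSpanSingleton_apply,
      TensorProduct.smul_tmul', smul_eq_mul, mul_comm, mul_smul, smul_comm a h m]
  have ht₁ : p₁ t = m₁ := by
    simp [hp₁, ht, LinearMap.rTensor_tmul]
  have ht₂ : p₂ t = m₂ := by
    simp [hp₂, ht, LinearMap.rTensor_tmul]
  refine ⟨y, ?_, ?_⟩
  · rw [← ht₁, ← hs, ← LinearMap.comp_apply, key₁]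
    simp [hy]
  · rw [← ht₂, ← hs, ← LinearMap.comp_apply, key₂]
    simp [hy]
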